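/- Let g ≥ 2 and let x be a nonzero vector in ℝ^{2g}. If x is not a real scalar multiple of any vector in ℤ^{2g}, then the orbit {M·x : M ∈ Sp(2g,ℤ)} is dense in ℝ^{2g}. If x = λ·x' for some λ ∈ ℝ and x' ∈ ℤ^{2g}, then the orbit {M·x : M ∈ Sp(2g,ℤ)} is a discrete closed subset of ℝ^{2g}. -/

import Mathlib

/-- The standard symplectic form on `ℝ^(2g)`:
`ω x y = ∑_{i=1}^g (xᵢ y_{g+i} - x_{g+i} yᵢ)`. -/
noncomputable def omegaForm (g : ℕ) (x y : Fin (2 * g) → ℝ) : ℝ :=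
  ∑ i : Fin g,
    (x ⟨i.val, by have := i.isLt; omega⟩ * y ⟨g + i.val, by have := i.isLt; omega⟩ -
      x ⟨g + i.val, by have := i.isLt; omega⟩ * y ⟨i.val, by have := i.isLt; omega⟩)

/-- The symplectic group `Sp(2g, ℝ)`: real `2g × 2g` matrices preserving `ω`. -/
def Sp (g : ℕ) : Set (Matrix (Fin (2 * g)) (Fin (2 * g)) ℝ) :=
  {M | ∀ x y : Fin (2 * g) → ℝ, omegaForm g (M.mulVec x) (M.mulVec y) = omegaForm g x y}

/-- The integer symplectic group `Sp(2g, ℤ)`, viewed as the set of symplectic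
matrices all of whose entries are integers. -/
def SpZ (g : ℕ) : Set (Matrix (Fin (2 * g)) (Fin (2 * g)) ℝ) :=
  {M | M ∈ Sp g ∧ ∀ i j, ∃ k : ℤ, M i j = (k : ℝ)}

/-- The symplectic orthogonal `x^⊥ = {y : ω(x,y) = 0}`, as a linear subspace. -/
noncomputable def symplOrth (g : ℕ) (x : Fin (2 * g) → ℝ) :
    Submodule ℝ (Fin (2 * g) → ℝ) where
  carrier := {y | omegaForm g x y = 0}
  zero_mem' := by simp [omegaForm]
  add_mem' := by
    intro a b ha hb
    simp only [Set.mem_setOf_eq] at *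
    have h : omegaForm g x (a + b) = omegaForm g x a + omegaForm g x b := by
      unfold omegaForm
      rw [← Finset.sum_add_distrib]
      exact Finset.sum_congr rfl fun i _ => by simp only [Pi.add_apply]; ring
    rw [h, ha, hb, add_zero]
  smul_mem' := by
    intro c a ha
    simp only [Set.mem_setOf_eq] at *
    have h : omegaForm g x (c • a) = c * omegaForm g x a := by
      unfold omegaForm
      rw [Finset.mul_sum]
      exact Finset.sum_congr rfl fun i _ => by
        simp only [Pi.smul_apply, smul_eq_mul]; ring
    rw [h, ha, mul_zero]

/-- The first standard basis vector `e₁` of `ℝ^(2g)`. -/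
def stdBasis1 (g : ℕ) : Fin (2 * g) → ℝ := fun j => if j.val = 0 then 1 else 0

def lo (g : ℕ) (i : Fin g) : Fin (2 * g) := ⟨i.val, by have := i.isLt; omega⟩
def hi (g : ℕ) (i : Fin g) : Fin (2 * g) := ⟨g + i.val, by have := i.isLt; omega⟩

lemma omegaForm_eq (g : ℕ) (x y : Fin (2 * g) → ℝ) :
    omegaForm g x y = ∑ i : Fin g, (x (lo g i) * y (hi g i) - x (hi g i) * y (lo g i)) := rfl

lemma lo_ne_hi (g : ℕ) (i j : Fin g) : lo g i ≠ hi g j := by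
  intro h
  have h2 := congrArg Fin.val h
  simp only [lo, hi] at h2
  have := i.isLt; omega

lemma lo_inj (g : ℕ) {i j : Fin g} (h : lo g i = lo g j) : i = j := by
  simpa [lo, Fin.ext_iff] using h

lemma hi_inj (g : ℕ) {i j : Fin g} (h : hi g i = hi g j) : i = j := by
  simpa [hi, Fin.ext_iff] using h

lemma lo_or_hi (g : ℕ) (j : Fin (2 * g)) : (∃ i, j = lo g i) ∨ (∃ i, j = hi g i) := by
  by_cases h : (j : ℕ) < g
  · exact Or.inl ⟨⟨j, h⟩, by simp [lo, Fin.ext_iff]⟩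
  · have hj := j.isLt
    exact Or.inr ⟨⟨j - g, by omega⟩, by simp [hi, Fin.ext_iff]; omega⟩

lemma omega_add_right (g : ℕ) (x y z : Fin (2 * g) → ℝ) :
    omegaForm g x (y + z) = omegaForm g x y + omegaForm g x z := by
  simp only [omegaForm_eq, Pi.add_apply, ← Finset.sum_add_distrib]
  exact Finset.sum_congr rfl fun i _ => by ring

lemma omega_smul_right (g : ℕ) (c : ℝ) (x y : Fin (2 * g) → ℝ) :
    omegaForm g x (c • y) = c * omegaForm g x y := by
  simp only [omegaForm_eq, Pi.smul_apply, smul_eq_mul, Finset.mul_sum]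
  exact Finset.sum_congr rfl fun i _ => by ring

lemma omega_antisymm (g : ℕ) (x y : Fin (2 * g) → ℝ) :
    omegaForm g x y = - omegaForm g y x := by
  simp only [omegaForm_eq, ← Finset.sum_neg_distrib]
  exact Finset.sum_congr rfl fun i _ => by ring

lemma omega_add_left (g : ℕ) (x y z : Fin (2 * g) → ℝ) :
    omegaForm g (x + y) z = omegaForm g x z + omegaForm g y z := by
  simp only [omegaForm_eq, Pi.add_apply, ← Finset.sum_add_distrib]
  exact Finset.sum_congr rfl fun i _ => by ring

lemma omega_smul_left (g : ℕ) (c : ℝ) (x y : Fin (2 * g) → ℝ) :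
    omegaForm g (c • x) y = c * omegaForm g x y := by
  simp only [omegaForm_eq, Pi.smul_apply, smul_eq_mul, Finset.mul_sum]
  exact Finset.sum_congr rfl fun i _ => by ring

lemma omega_self (g : ℕ) (x : Fin (2 * g) → ℝ) : omegaForm g x x = 0 := by
  simp only [omegaForm_eq]
  exact Finset.sum_eq_zero fun i _ => by ring

/-- coercion of integer vectors -/
def vZ (g : ℕ) (u : Fin (2 * g) → ℤ) : Fin (2 * g) → ℝ := fun j => (u j : ℝ)

/-- integer standard basis vectors -/
def eZ (g : ℕ) (a : Fin g) : Fin (2 * g) → ℤ := fun j => if j = lo g a then 1 else 0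
def fZ (g : ℕ) (a : Fin g) : Fin (2 * g) → ℤ := fun j => if j = hi g a then 1 else 0

/-- `J u`, so that `ω y u = ∑ j, y j * Jv u j`. -/
def JvZ (g : ℕ) (u : Fin (2 * g) → ℤ) : Fin (2 * g) → ℤ := fun j =>
  if h : (j : ℕ) < g then u (hi g ⟨j, h⟩) else - u (lo g ⟨(j : ℕ) - g, by have := j.isLt; omega⟩)

lemma JvZ_lo (g : ℕ) (u : Fin (2 * g) → ℤ) (i : Fin g) : JvZ g u (lo g i) = u (hi g i) := by
  have h : ((lo g i : Fin (2*g)) : ℕ) < g := i.isLt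
  simp only [JvZ, dif_pos h]
  congr 1

lemma JvZ_hi (g : ℕ) (u : Fin (2 * g) → ℤ) (i : Fin g) : JvZ g u (hi g i) = - u (lo g i) := by
  have h : ¬ ((hi g i : Fin (2*g)) : ℕ) < g := by simp [hi]
  simp only [JvZ, dif_neg h]
  congr 2
  simp [lo, hi, Fin.ext_iff]

lemma sum_split (g : ℕ) (F : Fin (2 * g) → ℝ) :
    ∑ j, F j = ∑ i : Fin g, F (lo g i) + ∑ i : Fin g, F (hi g i) := by
  rw [← Equiv.sum_comp (finSumFinEquiv.trans (finCongr (two_mul g).symm)) F,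
    Fintype.sum_sum_type]
  have h1 : ∀ i : Fin g, (finSumFinEquiv.trans (finCongr (two_mul g).symm)) (Sum.inl i)
      = lo g i := fun i => by apply Fin.ext; simp [lo]
  have h2 : ∀ i : Fin g, (finSumFinEquiv.trans (finCongr (two_mul g).symm)) (Sum.inr i)
      = hi g i := fun i => by apply Fin.ext; simp [hi]; omega
  simp only [h1, h2]

lemma omega_eq_sum_JvZ (g : ℕ) (y : Fin (2 * g) → ℝ) (u : Fin (2 * g) → ℤ) :
    omegaForm g y (vZ g u) = ∑ j, y j * ((JvZ g u j : ℤ) : ℝ) := by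
  rw [sum_split g (fun j => y j * ((JvZ g u j : ℤ) : ℝ)), omegaForm_eq,
    Finset.sum_sub_distrib, sub_eq_add_neg, ← Finset.sum_neg_distrib]
  congr 1
  · exact Finset.sum_congr rfl fun i _ => by rw [JvZ_lo]; unfold vZ; ring
  · exact Finset.sum_congr rfl fun i _ => by rw [JvZ_hi]; unfold vZ; push_cast; ring

/-- symplectic transvection along an integer vector -/
noncomputable def Tv (g : ℕ) (u : Fin (2 * g) → ℤ) (k : ℤ) :
    Matrix (Fin (2 * g)) (Fin (2 * g)) ℝ :=
  fun i j => (if i = j then 1 else 0) + (k : ℝ) * (u i : ℝ) * ((JvZ g u j : ℤ) : ℝ)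

lemma Tv_mulVec (g : ℕ) (u : Fin (2 * g) → ℤ) (k : ℤ) (y : Fin (2 * g) → ℝ) :
    (Tv g u k).mulVec y = y + ((k : ℝ) * omegaForm g y (vZ g u)) • vZ g u := by
  funext i
  simp only [Matrix.mulVec, dotProduct, Tv, Pi.add_apply, Pi.smul_apply, smul_eq_mul]
  rw [Finset.sum_congr rfl (fun j _ => add_mul _ _ _), Finset.sum_add_distrib]
  congr 1
  · simp [ite_mul]
  · rw [omega_eq_sum_JvZ, Finset.mul_sum, Finset.sum_mul]
    exact Finset.sum_congr rfl fun j _ => by unfold vZ; ring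

lemma Tv_mem_SpZ (g : ℕ) (u : Fin (2 * g) → ℤ) (k : ℤ) : Tv g u k ∈ SpZ g := by
  constructor
  · intro y z
    rw [Tv_mulVec, Tv_mulVec]
    rw [omega_add_left, omega_add_right, omega_add_right, omega_smul_left, omega_smul_right,
      omega_smul_right, omega_smul_left, omega_self]
    have h1 : omegaForm g (vZ g u) z = - omegaForm g z (vZ g u) := omega_antisymm ..
    rw [h1]
    ring
  · intro i j
    refine ⟨(if i = j then 1 else 0) + k * u i * JvZ g u j, ?_⟩
    simp only [Tv]
    push_cast
    split_ifs <;> simp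

lemma SpZ_one (g : ℕ) : (1 : Matrix (Fin (2 * g)) (Fin (2 * g)) ℝ) ∈ SpZ g := by
  refine ⟨fun x y => by rw [Matrix.one_mulVec, Matrix.one_mulVec], fun i j => ?_⟩
  refine ⟨if i = j then 1 else 0, ?_⟩
  simp [Matrix.one_apply]

lemma SpZ_mul (g : ℕ) {M N : Matrix (Fin (2 * g)) (Fin (2 * g)) ℝ}
    (hM : M ∈ SpZ g) (hN : N ∈ SpZ g) : M * N ∈ SpZ g := by
  refine ⟨fun x y => ?_, fun i j => ?_⟩
  · rw [← Matrix.mulVec_mulVec, ← Matrix.mulVec_mulVec, hM.1, hN.1]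
  · choose KM hKM using hM.2
    choose KN hKN using hN.2
    refine ⟨∑ l, KM i l * KN l j, ?_⟩
    simp only [Matrix.mul_apply, hKM, hKN]
    push_cast
    rfl

/-- the orbit -/
def orb (g : ℕ) (x : Fin (2 * g) → ℝ) : Set (Fin (2 * g) → ℝ) :=
  {y | ∃ M ∈ SpZ g, y = M.mulVec x}

lemma mem_orb_self (g : ℕ) (x : Fin (2 * g) → ℝ) : x ∈ orb g x :=
  ⟨1, SpZ_one g, (Matrix.one_mulVec x).symm⟩

lemma continuous_mulVec (g : ℕ) (M : Matrix (Fin (2 * g)) (Fin (2 * g)) ℝ) :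
    Continuous fun z : Fin (2 * g) → ℝ => M.mulVec z := by
  apply continuous_pi
  intro i
  simp only [Matrix.mulVec, dotProduct]
  exact continuous_finset_sum _ fun j _ => continuous_const.mul (continuous_apply j)

lemma closure_orb_invariant (g : ℕ) (x : Fin (2 * g) → ℝ)
    {M : Matrix (Fin (2 * g)) (Fin (2 * g)) ℝ} (hM : M ∈ SpZ g)
    {z : Fin (2 * g) → ℝ} (hz : z ∈ closure (orb g x)) :
    M.mulVec z ∈ closure (orb g x) := by
  have h1 : M.mulVec z ∈ (fun w => M.mulVec w) '' closure (orb g x) := ⟨z, hz, rfl⟩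
  have h2 := image_closure_subset_closure_image (s := orb g x) (continuous_mulVec g M) h1
  refine closure_mono ?_ h2
  rintro _ ⟨w, ⟨N, hN, rfl⟩, rfl⟩
  exact ⟨M * N, SpZ_mul g hM hN, by simp [Matrix.mulVec_mulVec]⟩

/-- rational independence of two reals -/
def Indep (α β : ℝ) : Prop := ∀ p q : ℤ, ¬(p = 0 ∧ q = 0) → (p : ℝ) * α + (q : ℝ) * β ≠ 0

lemma indep_exists_small {α β : ℝ} (h : Indep α β) {ε : ℝ} (hε : 0 < ε) :
    ∃ a b : ℤ, IsCoprime a b ∧ 0 < |(a : ℝ) * α + (b : ℝ) * β| ∧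
      |(a : ℝ) * α + (b : ℝ) * β| < ε := by
  have halpha : α ≠ 0 := by
    intro h0
    exact h 1 0 (by simp) (by simp [h0])
  -- the subgroup generated by α, β is dense
  have hd : Dense ((AddSubgroup.closure ({α, β} : Set ℝ) : AddSubgroup ℝ) : Set ℝ) := by
    rcases AddSubgroup.dense_or_cyclic (AddSubgroup.closure ({α, β} : Set ℝ)) with hd | ⟨a, ha⟩
    · exact hd
    · exfalso
      have hα : α ∈ AddSubgroup.closure ({α, β} : Set ℝ) :=
        AddSubgroup.subset_closure (by simp)
      have hβ : β ∈ AddSubgroup.closure ({α, β} : Set ℝ) :=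
        AddSubgroup.subset_closure (by simp)
      rw [ha] at hα hβ
      obtain ⟨m, hm⟩ := AddSubgroup.mem_closure_singleton.mp hα
      obtain ⟨n, hn⟩ := AddSubgroup.mem_closure_singleton.mp hβ
      have hmn : ¬(n = 0 ∧ -m = 0) := by
        rintro ⟨rfl, hm0⟩
        have : m = 0 := by omega
        subst this
        simp at hm
        exact halpha hm.symm
      refine h n (-m) hmn ?_
      rw [← hm, ← hn]
      push_cast [zsmul_eq_mul]
      ring
  -- find a small positive element
  obtain ⟨z, hz, hzH⟩ := Metric.dense_iff.mp hd (3 * ε / 4) (ε / 4) (by linarith)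
  have hz1 : ε / 2 < z ∧ z < ε := by
    rw [Metric.mem_ball, Real.dist_eq] at hz
    constructor <;> [nlinarith [abs_lt.mp hz]; nlinarith [abs_lt.mp hz]]
  obtain ⟨m, n, hmn⟩ := (AddSubgroup.mem_closure_pair).mp hzH
  have hval : (m : ℝ) * α + (n : ℝ) * β = z := by
    rw [← hmn]; push_cast [zsmul_eq_mul]; ring
  have hz0 : z ≠ 0 := by intro h0; rw [h0] at hz1; linarith [hz1.1, hε]
  have hmn0 : ¬(m = 0 ∧ n = 0) := by
    rintro ⟨rfl, rfl⟩; simp at hval; exact hz0 hval.symm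
  -- reduce to coprime
  set d : ℕ := Int.gcd m n with hd'
  have hdpos : 0 < d := Int.gcd_pos_iff.mpr (by
    by_contra hc; push_neg at hc; exact hmn0 ⟨hc.1, hc.2⟩)
  have hdz : (d : ℤ) ≠ 0 := by exact_mod_cast hdpos.ne'
  obtain ⟨a, hma⟩ : ∃ a : ℤ, m = (d : ℤ) * a :=
    ⟨m / d, (Int.mul_ediv_cancel' (Int.gcd_dvd_left m n)).symm⟩
  obtain ⟨b, hnb⟩ : ∃ b : ℤ, n = (d : ℤ) * b :=
    ⟨n / d, (Int.mul_ediv_cancel' (Int.gcd_dvd_right m n)).symm⟩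
  have ha' : m / (d : ℤ) = a := by rw [hma]; exact Int.mul_ediv_cancel_left _ hdz
  have hb' : n / (d : ℤ) = b := by rw [hnb]; exact Int.mul_ediv_cancel_left _ hdz
  have hco : IsCoprime a b := by
    rw [Int.isCoprime_iff_gcd_eq_one, ← ha', ← hb']
    exact Int.gcd_div_gcd_div_gcd hdpos
  have hvd : (d : ℝ) * ((a : ℝ) * α + (b : ℝ) * β) = z := by
    rw [← hval, hma, hnb]; push_cast; ring
  have hab0 : ¬(a = 0 ∧ b = 0) := by
    rintro ⟨rfl, rfl⟩
    apply hz0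
    rw [← hvd]; push_cast; ring
  have hne : (a : ℝ) * α + (b : ℝ) * β ≠ 0 := h a b hab0
  refine ⟨a, b, hco, abs_pos.mpr hne, ?_⟩
  have hd1 : (1 : ℝ) ≤ (d : ℝ) := by exact_mod_cast hdpos
  have : |(d : ℝ)| * |(a : ℝ) * α + (b : ℝ) * β| = |z| := by rw [← abs_mul, hvd]
  have hzlt : |z| < ε := by rw [abs_of_pos (by linarith [hz1.1])]; exact hz1.2
  have habs : |(a : ℝ) * α + (b : ℝ) * β| ≤ |z| := by
    rw [← this, abs_of_nonneg (by positivity : (0:ℝ) ≤ (d:ℝ))]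
    nlinarith [abs_nonneg ((a : ℝ) * α + (b : ℝ) * β)]
  linarith

lemma near_vert {α β : ℝ} (h : Indep α β) (β' : ℝ) {ε : ℝ} (hε : 0 < ε) :
    ∃ a b c d : ℤ, a * d - b * c = 1 ∧
      |(a : ℝ) * α + (b : ℝ) * β| < ε ∧ |(c : ℝ) * α + (d : ℝ) * β - β'| < ε := by
  obtain ⟨a, b, hco, hpos, hlt⟩ := indep_exists_small h hε
  set δ : ℝ := (a : ℝ) * α + (b : ℝ) * β with hδ
  have hδ0 : δ ≠ 0 := by intro h0; rw [h0] at hpos; simp at hpos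
  obtain ⟨u, v, huv⟩ := hco
  set γ : ℝ := ((-v : ℤ) : ℝ) * α + ((u : ℤ) : ℝ) * β with hγ
  set r : ℝ := (β' - γ) / δ with hr
  set t : ℤ := round r with ht
  refine ⟨a, b, -v + t * a, u + t * b, by linear_combination huv, hlt, ?_⟩
  have hrδ : r * δ = β' - γ := by rw [hr]; field_simp
  have key : ((-v + t * a : ℤ) : ℝ) * α + ((u + t * b : ℤ) : ℝ) * β - β' = δ * ((t : ℝ) - r) := by
    have expand : ((-v + t * a : ℤ) : ℝ) * α + ((u + t * b : ℤ) : ℝ) * β - β'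
        = (γ + (t : ℝ) * δ) - β' := by rw [hγ, hδ]; push_cast; ring
    rw [expand]
    linear_combination hrδ
  rw [key, abs_mul]
  have h1 : |(t : ℝ) - r| ≤ 1 / 2 := by
    rw [ht, abs_sub_comm]
    exact abs_sub_round r
  nlinarith [abs_nonneg ((t : ℝ) - r), abs_pos.mpr hδ0]

lemma rat_coprime_near (r : ℝ) {ε : ℝ} (hε : 0 < ε) :
    ∃ p q : ℤ, 0 < q ∧ IsCoprime p q ∧ |(p : ℝ) / (q : ℝ) - r| < ε := by
  obtain ⟨ρ, hρ⟩ := exists_rat_near r hε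
  refine ⟨ρ.num, ρ.den, by exact_mod_cast ρ.pos, ?_, ?_⟩
  · rw [Int.isCoprime_iff_gcd_eq_one]
    simpa [Int.gcd] using ρ.reduced
  · have : ((ρ.num : ℝ)) / ((ρ.den : ℤ) : ℝ) = (ρ : ℝ) := by
      rw [Rat.cast_def]; norm_num
    rw [this, abs_sub_comm]
    exact hρ

lemma sl2_approx {α β : ℝ} (h : Indep α β) (α' β' : ℝ) {ε : ℝ} (hε : 0 < ε) :
    ∃ a b c d : ℤ, a * d - b * c = 1 ∧
      |(a : ℝ) * α + (b : ℝ) * β - α'| < ε ∧ |(c : ℝ) * α + (d : ℝ) * β - β'| < ε := by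
  rcases eq_or_ne β' 0 with rfl | h0
  · obtain ⟨a₀, b₀, c₀, d₀, hdet, h1, h2⟩ := near_vert h α' hε
    refine ⟨c₀, d₀, -a₀, -b₀, by linear_combination hdet, h2, ?_⟩
    push_cast
    rw [show -(a₀ : ℝ) * α + -(b₀ : ℝ) * β - 0 = -((a₀ : ℝ) * α + (b₀ : ℝ) * β) by ring, abs_neg]
    exact h1
  · have hb' : 0 < |β'| := abs_pos.mpr h0
    obtain ⟨p, q, hq, hco, happ⟩ := rat_coprime_near (α' / β') (div_pos hε (by linarith) :
      0 < ε / (2 * |β'|))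
    obtain ⟨u, v, huv⟩ := hco
    set C : ℝ := |(v : ℝ)| + |(p : ℝ)| + |(u : ℝ)| + |(q : ℝ)| + 1 with hC
    have hCpos : 0 < C := by positivity
    have hq0 : ((q : ℤ) : ℝ) ≠ 0 := by
      have : (0 : ℝ) < (q : ℝ) := by exact_mod_cast hq
      linarith
    obtain ⟨a₀, b₀, c₀, d₀, hdet, hδ, hγ⟩ := near_vert h (β' / q)
      (div_pos hε (by linarith) : 0 < ε / (2 * C))
    set δ : ℝ := (a₀ : ℝ) * α + (b₀ : ℝ) * β with hδdef
    set γ : ℝ := (c₀ : ℝ) * α + (d₀ : ℝ) * β with hγdef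
    refine ⟨v * a₀ + p * c₀, v * b₀ + p * d₀, -u * a₀ + q * c₀, -u * b₀ + q * d₀,
      by linear_combination (v * q + p * u) * hdet + huv, ?_, ?_⟩
    · have e1 : ((v * a₀ + p * c₀ : ℤ) : ℝ) * α + ((v * b₀ + p * d₀ : ℤ) : ℝ) * β - α'
          = ((v : ℝ) * δ + (p : ℝ) * (γ - β' / q)) + ((p : ℝ) * (β' / q) - α') := by
        push_cast
        field_simp
        ring
      have e2 : (p : ℝ) * (β' / q) - α' = β' * ((p : ℝ) / q - α' / β') := by
        field_simp
      have b1 : |(v : ℝ) * δ| ≤ |(v : ℝ)| * (ε / (2 * C)) := by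
        rw [abs_mul]
        exact mul_le_mul_of_nonneg_left (le_of_lt hδ) (abs_nonneg _)
      have b2 : |(p : ℝ) * (γ - β' / q)| ≤ |(p : ℝ)| * (ε / (2 * C)) := by
        rw [abs_mul]
        exact mul_le_mul_of_nonneg_left (le_of_lt hγ) (abs_nonneg _)
      have b3 : |(p : ℝ) * (β' / q) - α'| < ε / 2 := by
        rw [e2, abs_mul]
        calc |β'| * |(p : ℝ) / q - α' / β'| < |β'| * (ε / (2 * |β'|)) :=
              mul_lt_mul_of_pos_left happ hb'
          _ = ε / 2 := by field_simp
      have hfrac : 0 < ε / (2 * C) := div_pos hε (by linarith)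
      have hmul : C * (ε / (2 * C)) = ε / 2 := by field_simp
      have hvp : |(v : ℝ)| + |(p : ℝ)| + 1 ≤ C := by
        have h1 := abs_nonneg ((u : ℝ))
        have h2 := abs_nonneg ((q : ℝ))
        rw [hC]; linarith
      rw [e1]
      calc |((v : ℝ) * δ + (p : ℝ) * (γ - β' / q)) + ((p : ℝ) * (β' / q) - α')|
          ≤ |(v : ℝ) * δ + (p : ℝ) * (γ - β' / q)| + |(p : ℝ) * (β' / q) - α'| := abs_add_le _ _
        _ ≤ (|(v : ℝ) * δ| + |(p : ℝ) * (γ - β' / q)|) + |(p : ℝ) * (β' / q) - α'| := by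
              linarith [abs_add_le ((v : ℝ) * δ) ((p : ℝ) * (γ - β' / q))]
        _ < ε := by nlinarith [abs_nonneg ((v : ℝ)), abs_nonneg ((p : ℝ))]
    · have e1 : ((-u * a₀ + q * c₀ : ℤ) : ℝ) * α + ((-u * b₀ + q * d₀ : ℤ) : ℝ) * β - β'
          = (-(u : ℝ)) * δ + (q : ℝ) * (γ - β' / q) := by
        push_cast
        field_simp
        ring
      have b1 : |(-(u : ℝ)) * δ| ≤ |(u : ℝ)| * (ε / (2 * C)) := by
        rw [abs_mul, abs_neg]
        exact mul_le_mul_of_nonneg_left (le_of_lt hδ) (abs_nonneg _)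
      have b2 : |(q : ℝ) * (γ - β' / q)| ≤ |(q : ℝ)| * (ε / (2 * C)) := by
        rw [abs_mul]
        exact mul_le_mul_of_nonneg_left (le_of_lt hγ) (abs_nonneg _)
      have hfrac : 0 < ε / (2 * C) := div_pos hε (by linarith)
      have hmul : C * (ε / (2 * C)) = ε / 2 := by field_simp
      have huq : |(u : ℝ)| + |(q : ℝ)| + 1 ≤ C := by
        have h1 := abs_nonneg ((v : ℝ))
        have h2 := abs_nonneg ((p : ℝ))
        rw [hC]; linarith
      rw [e1]
      calc |(-(u : ℝ)) * δ + (q : ℝ) * (γ - β' / q)|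
          ≤ |(-(u : ℝ)) * δ| + |(q : ℝ) * (γ - β' / q)| := abs_add_le _ _
        _ < ε := by nlinarith [abs_nonneg ((u : ℝ)), abs_nonneg ((q : ℝ))]

/-- replace the pair `m` coordinates -/
def up2 (g : ℕ) (z : Fin (2 * g) → ℝ) (m : Fin g) (α β : ℝ) : Fin (2 * g) → ℝ :=
  fun j => if j = lo g m then α else if j = hi g m then β else z j

lemma up2_lo (g : ℕ) (z : Fin (2 * g) → ℝ) (m : Fin g) (α β : ℝ) :
    up2 g z m α β (lo g m) = α := by simp [up2]

lemma up2_hi (g : ℕ) (z : Fin (2 * g) → ℝ) (m : Fin g) (α β : ℝ) :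
    up2 g z m α β (hi g m) = β := by simp [up2, (lo_ne_hi g m m).symm]

lemma up2_other (g : ℕ) (z : Fin (2 * g) → ℝ) (m : Fin g) (α β : ℝ) {j : Fin (2 * g)}
    (h1 : j ≠ lo g m) (h2 : j ≠ hi g m) : up2 g z m α β j = z j := by simp [up2, h1, h2]

lemma up2_up2 (g : ℕ) (z : Fin (2 * g) → ℝ) (m : Fin g) (α β α' β' : ℝ) :
    up2 g (up2 g z m α β) m α' β' = up2 g z m α' β' := by
  funext j
  rcases eq_or_ne j (lo g m) with rfl | h1
  · rw [up2_lo, up2_lo]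
  rcases eq_or_ne j (hi g m) with rfl | h2
  · rw [up2_hi, up2_hi]
  rw [up2_other _ _ _ _ _ h1 h2, up2_other _ _ _ _ _ h1 h2, up2_other _ _ _ _ _ h1 h2]

/-- the embedded SL2 matrix acting on the symplectic pair `m` -/
noncomputable def EmbM (g : ℕ) (a b c d : ℤ) (m : Fin g) :
    Matrix (Fin (2 * g)) (Fin (2 * g)) ℝ := fun i j =>
  if i = lo g m then (if j = lo g m then (a : ℝ) else if j = hi g m then (b : ℝ) else 0)
  else if i = hi g m then (if j = lo g m then (c : ℝ) else if j = hi g m then (d : ℝ) else 0)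
  else (if i = j then 1 else 0)

lemma EmbM_mulVec (g : ℕ) (a b c d : ℤ) (m : Fin g) (z : Fin (2 * g) → ℝ) :
    (EmbM g a b c d m).mulVec z =
      up2 g z m ((a : ℝ) * z (lo g m) + (b : ℝ) * z (hi g m))
        ((c : ℝ) * z (lo g m) + (d : ℝ) * z (hi g m)) := by
  funext i
  simp only [Matrix.mulVec, dotProduct, EmbM, up2]
  by_cases h1 : i = lo g m
  · have hrw : ∀ j : Fin (2 * g),
        (if i = lo g m then (if j = lo g m then (a : ℝ) else if j = hi g m then (b : ℝ) else 0)
          else if i = hi g m then (if j = lo g m then (c : ℝ) else if j = hi g m then (d : ℝ) else 0)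
          else if i = j then 1 else 0) * z j
        = (if j = lo g m then (a : ℝ) * z j else 0) + (if j = hi g m then (b : ℝ) * z j else 0) := by
      intro j
      rw [if_pos h1]
      rcases eq_or_ne j (lo g m) with rfl | hj1
      · simp [(lo_ne_hi g m m)]
      · rcases eq_or_ne j (hi g m) with rfl | hj2
        · simp [hj1]
        · simp [hj1, hj2]
    rw [Finset.sum_congr rfl fun j _ => hrw j, Finset.sum_add_distrib,
      Finset.sum_ite_eq' Finset.univ (lo g m) (fun j => (a : ℝ) * z j),
      Finset.sum_ite_eq' Finset.univ (hi g m) (fun j => (b : ℝ) * z j), if_pos h1]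
    simp
  · by_cases h2 : i = hi g m
    · have hrw : ∀ j : Fin (2 * g),
          (if i = lo g m then (if j = lo g m then (a : ℝ) else if j = hi g m then (b : ℝ) else 0)
            else if i = hi g m then (if j = lo g m then (c : ℝ) else if j = hi g m then (d : ℝ) else 0)
            else if i = j then 1 else 0) * z j
          = (if j = lo g m then (c : ℝ) * z j else 0) + (if j = hi g m then (d : ℝ) * z j else 0) := by
        intro j
        rw [if_neg h1, if_pos h2]
        rcases eq_or_ne j (lo g m) with rfl | hj1
        · simp [(lo_ne_hi g m m)]
        · rcases eq_or_ne j (hi g m) with rfl | hj2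
          · simp [hj1]
          · simp [hj1, hj2]
      rw [Finset.sum_congr rfl fun j _ => hrw j, Finset.sum_add_distrib,
        Finset.sum_ite_eq' Finset.univ (lo g m) (fun j => (c : ℝ) * z j),
        Finset.sum_ite_eq' Finset.univ (hi g m) (fun j => (d : ℝ) * z j), if_neg h1, if_pos h2]
      simp
    · have hrw : ∀ j : Fin (2 * g),
          (if i = lo g m then (if j = lo g m then (a : ℝ) else if j = hi g m then (b : ℝ) else 0)
            else if i = hi g m then (if j = lo g m then (c : ℝ) else if j = hi g m then (d : ℝ) else 0)
            else if i = j then 1 else 0) * z j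
          = (if i = j then z j else 0) := by
        intro j
        rw [if_neg h1, if_neg h2]
        rcases eq_or_ne i j with rfl | hij
        · simp
        · simp [hij]
      rw [Finset.sum_congr rfl fun j _ => hrw j, Finset.sum_ite_eq Finset.univ i z,
        if_neg h1, if_neg h2]
      simp

lemma EmbM_mem_SpZ (g : ℕ) (a b c d : ℤ) (m : Fin g) (hdet : a * d - b * c = 1) :
    EmbM g a b c d m ∈ SpZ g := by
  constructor
  · intro y z
    rw [EmbM_mulVec, EmbM_mulVec, omegaForm_eq, omegaForm_eq]
    refine Finset.sum_congr rfl fun i _ => ?_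
    rcases eq_or_ne i m with rfl | him
    · rw [up2_lo, up2_hi, up2_lo, up2_hi]
      have hdet' : (a : ℝ) * d - b * c = 1 := by exact_mod_cast hdet
      linear_combination (y (lo g i) * z (hi g i) - y (hi g i) * z (lo g i)) * hdet'
    · have e1 : lo g i ≠ lo g m := fun h => him (lo_inj g h)
      have e2 : lo g i ≠ hi g m := lo_ne_hi g i m
      have e3 : hi g i ≠ hi g m := fun h => him (hi_inj g h)
      have e4 : hi g i ≠ lo g m := (lo_ne_hi g m i).symm
      rw [up2_other _ _ _ _ _ e1 e2, up2_other _ _ _ _ _ e4 e3,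
        up2_other _ _ _ _ _ e1 e2, up2_other _ _ _ _ _ e4 e3]
  · intro i j
    refine ⟨if i = lo g m then (if j = lo g m then a else if j = hi g m then b else 0)
      else if i = hi g m then (if j = lo g m then c else if j = hi g m then d else 0)
      else if i = j then 1 else 0, ?_⟩
    simp only [EmbM]
    split_ifs <;> push_cast <;> rfl

lemma pair_free (g : ℕ) (x : Fin (2 * g) → ℝ) (z : Fin (2 * g) → ℝ)
    (hz : z ∈ closure (orb g x)) (m : Fin g)
    (hind : Indep (z (lo g m)) (z (hi g m))) (α β : ℝ) :
    up2 g z m α β ∈ closure (orb g x) := by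
  have hcl : IsClosed (closure (orb g x)) := isClosed_closure
  rw [← hcl.closure_eq, Metric.mem_closure_iff]
  intro ε hε
  obtain ⟨a, b, c, d, hdet, h1, h2⟩ := sl2_approx hind α β (half_pos hε)
  refine ⟨(EmbM g a b c d m).mulVec z,
    closure_orb_invariant g x (EmbM_mem_SpZ g a b c d m hdet) hz, ?_⟩
  rw [EmbM_mulVec]
  have hle : dist (up2 g z m α β)
      (up2 g z m ((a : ℝ) * z (lo g m) + (b : ℝ) * z (hi g m))
        ((c : ℝ) * z (lo g m) + (d : ℝ) * z (hi g m))) ≤ ε / 2 := by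
    rw [dist_pi_le_iff (by linarith)]
    intro j
    rcases eq_or_ne j (lo g m) with rfl | hj1
    · rw [up2_lo, up2_lo, Real.dist_eq, abs_sub_comm]
      exact le_of_lt h1
    rcases eq_or_ne j (hi g m) with rfl | hj2
    · rw [up2_hi, up2_hi, Real.dist_eq, abs_sub_comm]
      exact le_of_lt h2
    · rw [up2_other _ _ _ _ _ hj1 hj2, up2_other _ _ _ _ _ hj1 hj2]
      simp [dist_self]
      linarith
  linarith [hle]

lemma omega_eZ (g : ℕ) (y : Fin (2 * g) → ℝ) (a : Fin g) :
    omegaForm g y (vZ g (eZ g a)) = - y (hi g a) := by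
  rw [omegaForm_eq, Finset.sum_eq_single a]
  · have h1 : vZ g (eZ g a) (hi g a) = 0 := by
      simp [vZ, eZ, (lo_ne_hi g a a).symm]
    have h2 : vZ g (eZ g a) (lo g a) = 1 := by simp [vZ, eZ]
    rw [h1, h2]; ring
  · intro i _ hia
    have h1 : vZ g (eZ g a) (hi g i) = 0 := by
      simp [vZ, eZ, (lo_ne_hi g a i).symm]
    have h2 : vZ g (eZ g a) (lo g i) = 0 := by
      have : lo g i ≠ lo g a := fun h => hia (lo_inj g h)
      simp [vZ, eZ, this]
    rw [h1, h2]; ring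
  · intro h; exact absurd (Finset.mem_univ a) h

lemma omega_fZ (g : ℕ) (y : Fin (2 * g) → ℝ) (a : Fin g) :
    omegaForm g y (vZ g (fZ g a)) = y (lo g a) := by
  rw [omegaForm_eq, Finset.sum_eq_single a]
  · have h1 : vZ g (fZ g a) (hi g a) = 1 := by simp [vZ, fZ]
    have h2 : vZ g (fZ g a) (lo g a) = 0 := by simp [vZ, fZ, lo_ne_hi g a a]
    rw [h1, h2]; ring
  · intro i _ hia
    have h1 : vZ g (fZ g a) (hi g i) = 0 := by
      have : hi g i ≠ hi g a := fun h => hia (hi_inj g h)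
      simp [vZ, fZ, this]
    have h2 : vZ g (fZ g a) (lo g i) = 0 := by simp [vZ, fZ, lo_ne_hi g i a]
    rw [h1, h2]; ring
  · intro h; exact absurd (Finset.mem_univ a) h

lemma vZ_add (g : ℕ) (u w : Fin (2 * g) → ℤ) : vZ g (u + w) = vZ g u + vZ g w := by
  funext j; simp [vZ]

lemma exists_rat_ne_zero_near (σ : ℝ) {δ : ℝ} (hδ : 0 < δ) :
    ∃ ρ : ℚ, (ρ : ℝ) ≠ 0 ∧ |(ρ : ℝ) - σ| < δ := by
  obtain ⟨q1, hq1a, hq1b⟩ := exists_rat_btwn (show σ < σ + δ / 2 by linarith)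
  obtain ⟨q2, hq2a, hq2b⟩ := exists_rat_btwn (show σ + δ / 2 < σ + δ by linarith)
  rcases eq_or_ne ((q1 : ℝ)) 0 with h0 | h0
  · refine ⟨q2, ?_, ?_⟩
    · intro h; rw [h] at hq2a; rw [h0] at hq1b; linarith
    · rw [abs_lt]; constructor <;> linarith
  · refine ⟨q1, h0, ?_⟩
    rw [abs_lt]; constructor <;> linarith

lemma exists_irrational_near (τ : ℝ) {δ : ℝ} (hδ : 0 < δ) :
    ∃ ι : ℝ, Irrational ι ∧ |ι - τ| < δ := by
  obtain ⟨ι, hι, h1, h2⟩ := exists_irrational_btwn (show τ < τ + δ by linarith)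
  exact ⟨ι, hι, by rw [abs_lt]; constructor <;> linarith⟩

lemma indep_rat_irrational (ρ : ℚ) (hρ : (ρ : ℝ) ≠ 0) (ι : ℝ) (hι : Irrational ι) :
    Indep ((ρ : ℝ)) ι := by
  intro p q hpq h0
  rcases eq_or_ne q 0 with rfl | hq
  · have hp : p ≠ 0 := by tauto
    simp at h0
    rcases h0 with h0 | h0
    · exact hp h0
    · exact hρ (by rw [h0]; simp)
  · have hqR : ((q : ℤ) : ℝ) ≠ 0 := Int.cast_ne_zero.mpr hq
    apply hι
    refine ⟨(-(p * ρ)) / q, ?_⟩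
    push_cast
    rw [div_eq_iff hqR]
    linear_combination -h0

lemma bootstrap (g : ℕ) (x : Fin (2 * g) → ℝ) (y : Fin (2 * g) → ℝ) (m : Fin g)
    (hy : ∀ α β : ℝ, up2 g y m α β ∈ closure (orb g x)) :
    ∀ w : Fin (2 * g) → ℝ, w ∈ closure (orb g x) := by
  have main : ∀ K : Finset (Fin g), ∀ w : Fin (2 * g) → ℝ, ∃ b : Fin (2 * g) → ℝ,
      (∀ i ∈ K, b (lo g i) = w (lo g i) ∧ b (hi g i) = w (hi g i)) ∧
      (∀ α β : ℝ, up2 g b m α β ∈ closure (orb g x)) := by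
    intro K
    induction K using Finset.induction_on with
    | empty => exact fun w => ⟨y, fun i hi => absurd hi (by simp), hy⟩
    | @insert n K hK ih =>
      intro w
      obtain ⟨b, hb1, hb3⟩ := ih w
      have cond1 : ∀ i ∈ insert n K,
          up2 g b n (w (lo g n)) (w (hi g n)) (lo g i) = w (lo g i) ∧
          up2 g b n (w (lo g n)) (w (hi g n)) (hi g i) = w (hi g i) := by
        intro i hi'
        rcases Finset.mem_insert.mp hi' with rfl | hiK
        · rw [up2_lo, up2_hi]; exact ⟨rfl, rfl⟩
        · have hin : i ≠ n := fun h => hK (h ▸ hiK)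
          rw [up2_other _ _ _ _ _ (fun h => hin (lo_inj g h)) (lo_ne_hi g i n),
            up2_other _ _ _ _ _ ((lo_ne_hi g n i).symm) (fun h => hin (hi_inj g h))]
          exact hb1 i hiK
      by_cases hne : n = m
      · subst hne
        refine ⟨up2 g b n (w (lo g n)) (w (hi g n)), cond1, ?_⟩
        intro α β; rw [up2_up2]; exact hb3 α β
      · refine ⟨up2 g b n (w (lo g n)) (w (hi g n)), cond1, ?_⟩
        intro α β
        rw [← (isClosed_closure (s := orb g x)).closure_eq, Metric.mem_closure_iff]
        intro ε hε
        have hlolo : lo g n ≠ lo g m := fun h => hne (lo_inj g h)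
        have hlohi : lo g n ≠ hi g m := lo_ne_hi g n m
        have hhilo : hi g n ≠ lo g m := (lo_ne_hi g m n).symm
        have hhihi : hi g n ≠ hi g m := fun h => hne (hi_inj g h)
        set Blo : ℝ := b (lo g n) with hBlo
        set Bhi : ℝ := b (hi g n) with hBhi
        set s₀ : ℝ := w (lo g n) - Blo + Bhi with hs₀
        set t₀ : ℝ := Bhi + Blo - w (hi g n) with ht₀
        obtain ⟨ρ, hρ0, hρc⟩ := exists_rat_ne_zero_near (s₀ + Blo - t₀)
          (show (0:ℝ) < ε / 2 by linarith)
        obtain ⟨ι, hι, hιc⟩ := exists_irrational_near (t₀ + s₀ - Bhi)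
          (show (0:ℝ) < ε / 2 by linarith)
        set s : ℝ := ((ρ : ℝ) + ι + Bhi - Blo) / 2 with hs
        set t : ℝ := s + Blo - ρ with ht
        set z : Fin (2 * g) → ℝ := up2 g b m s t with hz
        have hzmem : z ∈ closure (orb g x) := by rw [hz]; exact hb3 s t
        have hz_lon : z (lo g n) = Blo := by
          rw [hz, hBlo]; exact up2_other _ _ _ _ _ hlolo hlohi
        have hz_hin : z (hi g n) = Bhi := by
          rw [hz, hBhi]; exact up2_other _ _ _ _ _ hhilo hhihi
        have hz_lom : z (lo g m) = s := by rw [hz]; exact up2_lo _ _ _ _ _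
        have hz_him : z (hi g m) = t := by rw [hz]; exact up2_hi _ _ _ _ _
        have hu2 : ∀ j, vZ g (fZ g n + eZ g m) j
            = (if j = hi g n then (1:ℝ) else 0) + (if j = lo g m then (1:ℝ) else 0) := by
          intro j
          simp only [vZ, Pi.add_apply, fZ, eZ]
          rw [Int.cast_add]
          split_ifs <;> simp
        have hu1 : ∀ j, vZ g (eZ g n + fZ g m) j
            = (if j = lo g n then (1:ℝ) else 0) + (if j = hi g m then (1:ℝ) else 0) := by
          intro j
          simp only [vZ, Pi.add_apply, eZ, fZ]
          rw [Int.cast_add]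
          split_ifs <;> simp
        have hω2 : omegaForm g z (vZ g (fZ g n + eZ g m)) = Blo - t := by
          rw [vZ_add, omega_add_right, omega_fZ, omega_eZ, hz_lon, hz_him]; ring
        set z1 : Fin (2 * g) → ℝ := z + (Blo - t) • vZ g (fZ g n + eZ g m) with hz1
        have hz1mem : z1 ∈ closure (orb g x) := by
          have he : z1 = (Tv g (fZ g n + eZ g m) 1).mulVec z := by
            rw [Tv_mulVec, hω2, hz1]
            norm_num
          rw [he]
          exact closure_orb_invariant g x (Tv_mem_SpZ g _ 1) hzmem
        have hz1_lon : z1 (lo g n) = Blo := by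
          rw [hz1]
          simp only [Pi.add_apply, Pi.smul_apply, smul_eq_mul]
          rw [hu2 (lo g n), if_neg (lo_ne_hi g n n), if_neg hlolo, hz_lon]; ring
        have hz1_hin : z1 (hi g n) = Bhi + (Blo - t) := by
          rw [hz1]
          simp only [Pi.add_apply, Pi.smul_apply, smul_eq_mul]
          rw [hu2 (hi g n), if_pos rfl, if_neg hhilo, hz_hin]; ring
        have hz1_lom : z1 (lo g m) = s + (Blo - t) := by
          rw [hz1]
          simp only [Pi.add_apply, Pi.smul_apply, smul_eq_mul]
          rw [hu2 (lo g m), if_neg (lo_ne_hi g m n), if_pos rfl, hz_lom]; ring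
        have hz1_him : z1 (hi g m) = t := by
          rw [hz1]
          simp only [Pi.add_apply, Pi.smul_apply, smul_eq_mul]
          rw [hu2 (hi g m), if_neg (Ne.symm hhihi), if_neg ((lo_ne_hi g m m).symm), hz_him]
          ring
        have hω1 : omegaForm g z1 (vZ g (eZ g n + fZ g m)) = s - Bhi := by
          rw [vZ_add, omega_add_right, omega_eZ, omega_fZ, hz1_hin, hz1_lom]; ring
        set z2 : Fin (2 * g) → ℝ := z1 + (s - Bhi) • vZ g (eZ g n + fZ g m) with hz2
        have hz2mem : z2 ∈ closure (orb g x) := by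
          have he : z2 = (Tv g (eZ g n + fZ g m) 1).mulVec z1 := by
            rw [Tv_mulVec, hω1, hz2]
            norm_num
          rw [he]
          exact closure_orb_invariant g x (Tv_mem_SpZ g _ 1) hz1mem
        have hz2_lon : z2 (lo g n) = Blo + (s - Bhi) := by
          rw [hz2]
          simp only [Pi.add_apply, Pi.smul_apply, smul_eq_mul]
          rw [hu1 (lo g n), if_pos rfl, if_neg hlohi, hz1_lon]; ring
        have hz2_hin : z2 (hi g n) = Bhi + (Blo - t) := by
          rw [hz2]
          simp only [Pi.add_apply, Pi.smul_apply, smul_eq_mul]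
          rw [hu1 (hi g n), if_neg ((lo_ne_hi g n n).symm), if_neg hhihi, hz1_hin]; ring
        have hz2_lom : z2 (lo g m) = (ρ : ℝ) := by
          rw [hz2]
          simp only [Pi.add_apply, Pi.smul_apply, smul_eq_mul]
          rw [hu1 (lo g m), if_neg (Ne.symm hlolo), if_neg (lo_ne_hi g m m), hz1_lom, ht]
          ring
        have hz2_him : z2 (hi g m) = ι := by
          rw [hz2]
          simp only [Pi.add_apply, Pi.smul_apply, smul_eq_mul]
          rw [hu1 (hi g m), if_neg ((lo_ne_hi g n m).symm), if_pos rfl, hz1_him, ht, hs]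
          ring
        have hind : Indep (z2 (lo g m)) (z2 (hi g m)) := by
          rw [hz2_lom, hz2_him]
          exact indep_rat_irrational ρ hρ0 ι hι
        refine ⟨up2 g z2 m α β, pair_free g x z2 hz2mem m hind α β, ?_⟩
        have hsdiff : |s - s₀| < ε / 2 := by
          have he : s - s₀ = (((ρ : ℝ) - (s₀ + Blo - t₀)) + (ι - (t₀ + s₀ - Bhi))) / 2 := by
            rw [hs]; ring
          rw [he, abs_div]
          have h1 := abs_add_le ((ρ : ℝ) - (s₀ + Blo - t₀)) (ι - (t₀ + s₀ - Bhi))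
          have h2 : |(2:ℝ)| = 2 := by norm_num
          rw [h2]
          linarith
        have htdiff : |t - t₀| < ε / 2 := by
          have he : t - t₀ = ((ι - (t₀ + s₀ - Bhi)) - ((ρ : ℝ) - (s₀ + Blo - t₀))) / 2 := by
            rw [ht, hs]; ring
          rw [he, abs_div]
          have h1 := abs_sub ((ι - (t₀ + s₀ - Bhi))) (((ρ : ℝ) - (s₀ + Blo - t₀)))
          have h2 : |(2:ℝ)| = 2 := by norm_num
          rw [h2]
          have h3 := abs_sub_abs_le_abs_sub (ι - (t₀ + s₀ - Bhi)) ((ρ : ℝ) - (s₀ + Blo - t₀))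
          have h4 := abs_add_le (ι - (t₀ + s₀ - Bhi)) (-((ρ : ℝ) - (s₀ + Blo - t₀)))
          rw [abs_neg] at h4
          have h5 : ι - (t₀ + s₀ - Bhi) - ((ρ : ℝ) - (s₀ + Blo - t₀))
              = (ι - (t₀ + s₀ - Bhi)) + -((ρ : ℝ) - (s₀ + Blo - t₀)) := by ring
          rw [h5]
          linarith
        apply lt_of_le_of_lt ?_ (show ε / 2 < ε by linarith)
        rw [dist_pi_le_iff (by linarith : (0:ℝ) ≤ ε / 2)]
        intro j
        rcases eq_or_ne j (lo g m) with rfl | hj1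
        · rw [up2_lo, up2_lo, dist_self]; linarith
        rcases eq_or_ne j (hi g m) with rfl | hj2
        · rw [up2_hi, up2_hi, dist_self]; linarith
        rw [up2_other _ _ _ _ _ hj1 hj2, up2_other _ _ _ _ _ hj1 hj2]
        rcases eq_or_ne j (lo g n) with rfl | hj3
        · rw [up2_lo, hz2_lon, Real.dist_eq]
          have hw : w (lo g n) = s₀ + Blo - Bhi := by rw [hs₀]; ring
          have he : w (lo g n) - (Blo + (s - Bhi)) = -(s - s₀) := by rw [hw]; ring
          rw [he, abs_neg]
          linarith
        rcases eq_or_ne j (hi g n) with rfl | hj4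
        · rw [up2_hi, hz2_hin, Real.dist_eq]
          have hw : w (hi g n) = Bhi + Blo - t₀ := by rw [ht₀]; ring
          have he : w (hi g n) - (Bhi + (Blo - t)) = t - t₀ := by rw [hw]; ring
          rw [he]
          linarith
        · rw [up2_other _ _ _ _ _ hj3 hj4]
          have hz2j : z2 j = b j := by
            rw [hz2]
            simp only [Pi.add_apply, Pi.smul_apply, smul_eq_mul]
            rw [hu1 j, if_neg hj3, if_neg hj2, hz1]
            simp only [Pi.add_apply, Pi.smul_apply, smul_eq_mul]
            rw [hu2 j, if_neg hj4, if_neg hj1, hz]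
            rw [up2_other _ _ _ _ _ hj1 hj2]
            ring
          rw [hz2j, dist_self]
          linarith
  intro w
  obtain ⟨b, hb1, hb3⟩ := main Finset.univ w
  have hw : w = up2 g b m (w (lo g m)) (w (hi g m)) := by
    funext j
    rcases lo_or_hi g j with ⟨i, rfl⟩ | ⟨i, rfl⟩
    · rcases eq_or_ne i m with rfl | him
      · rw [up2_lo]
      · rw [up2_other _ _ _ _ _ (fun h => him (lo_inj g h)) (lo_ne_hi g i m)]
        exact ((hb1 i (Finset.mem_univ i)).1).symm
    · rcases eq_or_ne i m with rfl | him
      · rw [up2_hi]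
      · rw [up2_other _ _ _ _ _ ((lo_ne_hi g m i).symm) (fun h => him (hi_inj g h))]
        exact ((hb1 i (Finset.mem_univ i)).2).symm
  have := hb3 (w (lo g m)) (w (hi g m))
  rwa [← hw] at this

lemma indep_ne_zero {a b : ℝ} (h : Indep a b) : a ≠ 0 :=
  fun h0 => h 1 0 (by simp) (by simp [h0])

lemma indep_symm {a b : ℝ} (h : Indep a b) : Indep b a := by
  intro p q hpq h0
  exact h q p (by tauto) (by linarith)

lemma indep_neg_left {a b : ℝ} (h : Indep a b) : Indep (-a) b := by
  intro p q hpq h0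
  refine h (-p) q ?_ ?_
  · rintro ⟨h1, h2⟩; exact hpq ⟨by omega, h2⟩
  · push_cast; linarith

lemma indep_neg_right {a b : ℝ} (h : Indep a b) : Indep a (-b) := by
  intro p q hpq h0
  refine h p (-q) ?_ ?_
  · rintro ⟨h1, h2⟩; exact hpq ⟨h1, by omega⟩
  · push_cast; linarith

lemma of_not_indep {a b : ℝ} (h : ¬ Indep a b) :
    ∃ p q : ℤ, ¬(p = 0 ∧ q = 0) ∧ (p : ℝ) * a + (q : ℝ) * b = 0 := by
  by_contra hk
  push_neg at hk
  exact h fun p q hpq heq => hk p q (by tauto) heq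

lemma indep_shift {α h β : ℝ} (hab : Indep α β) (hdep : ¬ Indep α h) :
    Indep α (h + (α + β)) := by
  by_contra hdep'
  obtain ⟨p, q, hpq, hrel⟩ := of_not_indep hdep
  obtain ⟨p', q', hpq', hrel'⟩ := of_not_indep hdep'
  have hα : α ≠ 0 := indep_ne_zero hab
  have hq : q ≠ 0 := by
    rintro rfl
    have hp : p ≠ 0 := by tauto
    have : (p : ℝ) ≠ 0 := Int.cast_ne_zero.mpr hp
    apply hα
    have h0' : (p : ℝ) * α = 0 := by push_cast at hrel; linarith
    exact (mul_eq_zero.mp h0').resolve_left ‹(p:ℝ) ≠ 0›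
  have hq' : q' ≠ 0 := by
    rintro rfl
    have hp : p' ≠ 0 := by tauto
    have : (p' : ℝ) ≠ 0 := Int.cast_ne_zero.mpr hp
    apply hα
    have h0' : (p' : ℝ) * α = 0 := by push_cast at hrel'; linarith
    exact (mul_eq_zero.mp h0').resolve_left ‹(p':ℝ) ≠ 0›
  refine hab (q' * p - q * p' - q * q') (-(q * q')) ?_ ?_
  · rintro ⟨h1, h2⟩
    exact (mul_ne_zero hq hq') (by omega)
  · push_cast
    linear_combination (q' : ℝ) * hrel - (q : ℝ) * hrel'

lemma Rsw_mem (g : ℕ) (m : Fin g) : EmbM g 0 (-1) 1 0 m ∈ SpZ g :=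
  EmbM_mem_SpZ g 0 (-1) 1 0 m (by norm_num)

lemma Rsw_mulVec (g : ℕ) (m : Fin g) (z : Fin (2 * g) → ℝ) :
    (EmbM g 0 (-1) 1 0 m).mulVec z = up2 g z m (-(z (hi g m))) (z (lo g m)) := by
  rw [EmbM_mulVec]
  have hA : ((0:ℤ) : ℝ) * z (lo g m) + ((-1:ℤ) : ℝ) * z (hi g m) = -(z (hi g m)) := by
    push_cast; ring
  have hB : ((1:ℤ) : ℝ) * z (lo g m) + ((0:ℤ) : ℝ) * z (hi g m) = z (lo g m) := by
    push_cast; ring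
  rw [hA, hB]

lemma pair_from_lolo (g : ℕ) (x y : Fin (2 * g) → ℝ) (hy : ∃ M ∈ SpZ g, y = M.mulVec x)
    (a b : Fin g) (hab : a ≠ b) (hind : Indep (y (lo g a)) (y (lo g b))) :
    ∃ M ∈ SpZ g, ∃ m : Fin g, Indep ((M.mulVec x) (lo g m)) ((M.mulVec x) (hi g m)) := by
  obtain ⟨M, hM, hyM⟩ := hy
  by_cases hcase : Indep (y (lo g a)) (y (hi g a))
  · exact ⟨M, hM, a, by rw [← hyM]; exact hcase⟩
  · have hω : omegaForm g y (vZ g (fZ g a + fZ g b)) = y (lo g a) + y (lo g b) := by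
      rw [vZ_add, omega_add_right, omega_fZ, omega_fZ]
    have hu : ∀ j, vZ g (fZ g a + fZ g b) j
        = (if j = hi g a then (1:ℝ) else 0) + (if j = hi g b then (1:ℝ) else 0) := by
      intro j
      simp only [vZ, Pi.add_apply, fZ]
      rw [Int.cast_add]
      split_ifs <;> simp
    have hTv : (Tv g (fZ g a + fZ g b) 1).mulVec y
        = y + (y (lo g a) + y (lo g b)) • vZ g (fZ g a + fZ g b) := by
      rw [Tv_mulVec, hω]; norm_num
    have h1 : ((Tv g (fZ g a + fZ g b) 1).mulVec y) (lo g a) = y (lo g a) := by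
      rw [hTv]
      simp only [Pi.add_apply, Pi.smul_apply, smul_eq_mul]
      rw [hu (lo g a), if_neg (lo_ne_hi g a a), if_neg (lo_ne_hi g a b)]; ring
    have h2 : ((Tv g (fZ g a + fZ g b) 1).mulVec y) (hi g a)
        = y (hi g a) + (y (lo g a) + y (lo g b)) := by
      rw [hTv]
      simp only [Pi.add_apply, Pi.smul_apply, smul_eq_mul]
      rw [hu (hi g a), if_pos rfl, if_neg (fun h => hab (hi_inj g h))]; ring
    refine ⟨Tv g (fZ g a + fZ g b) 1 * M, SpZ_mul g (Tv_mem_SpZ g _ 1) hM, a, ?_⟩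
    have hcomp : (Tv g (fZ g a + fZ g b) 1 * M).mulVec x
        = (Tv g (fZ g a + fZ g b) 1).mulVec y := by
      rw [hyM, Matrix.mulVec_mulVec]
    rw [hcomp, h1, h2]
    exact indep_shift hind hcase

lemma exists_indep_coords (g : ℕ) (x : Fin (2 * g) → ℝ)
    (hx : ¬ ∃ (c : ℝ) (u : Fin (2 * g) → ℤ), x = c • fun i => ((u i : ℤ) : ℝ)) :
    ∃ i j : Fin (2 * g), Indep (x i) (x j) := by
  by_contra hcon
  push_neg at hcon
  have key : ∀ i j : Fin (2 * g), ∃ p q : ℤ,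
      ¬(p = 0 ∧ q = 0) ∧ (p : ℝ) * x i + (q : ℝ) * x j = 0 :=
    fun i j => of_not_indep (hcon i j)
  have hx0 : x ≠ 0 := by
    intro h0
    exact hx ⟨0, fun _ => 0, by rw [h0]; funext j; simp⟩
  obtain ⟨j₀, hj₀⟩ := Function.ne_iff.mp hx0
  have hj₀' : x j₀ ≠ 0 := hj₀
  have hrat : ∀ i, ∃ r : ℚ, x i = (r : ℝ) * x j₀ := by
    intro i
    obtain ⟨p, q, hpq, hrel⟩ := key i j₀
    have hp : p ≠ 0 := by
      rintro rfl
      have hq : q ≠ 0 := by tauto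
      apply hj₀'
      have h1 : (q : ℝ) * x j₀ = 0 := by push_cast at hrel; linarith
      exact (mul_eq_zero.mp h1).resolve_left (Int.cast_ne_zero.mpr hq)
    refine ⟨(-q : ℚ) / (p : ℚ), ?_⟩
    have hpR : (p : ℝ) ≠ 0 := Int.cast_ne_zero.mpr hp
    have hcast : (((-q : ℚ) / (p : ℚ) : ℚ) : ℝ) = (-(q : ℝ)) / (p : ℝ) := by push_cast; ring
    rw [hcast, div_mul_eq_mul_div, eq_div_iff hpR]
    linear_combination hrel
  choose r hr using hrat
  set D : ℤ := ∏ i : Fin (2 * g), ((r i).den : ℤ) with hD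
  have hDpos : 0 < D := Finset.prod_pos (fun i _ => by exact_mod_cast (r i).pos)
  have hdvd : ∀ i, ((r i).den : ℤ) ∣ D := fun i => Finset.dvd_prod_of_mem _ (Finset.mem_univ i)
  refine hx ⟨x j₀ / (D : ℝ), fun i => (r i).num * (D / ((r i).den : ℤ)), ?_⟩
  funext i
  simp only [Pi.smul_apply, smul_eq_mul]
  obtain ⟨E, hE⟩ := hdvd i
  have hden0 : ((r i).den : ℤ) ≠ 0 := by exact_mod_cast (r i).pos.ne'
  have hdiv : D / ((r i).den : ℤ) = E := by rw [hE]; exact Int.mul_ediv_cancel_left _ hden0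
  rw [hr i, hdiv]
  have hE0 : (E : ℝ) ≠ 0 := by
    intro h0
    have hEz : E = 0 := by exact_mod_cast h0
    rw [hEz, mul_zero] at hE
    omega
  have hDR : ((D : ℤ) : ℝ) ≠ 0 := Int.cast_ne_zero.mpr hDpos.ne'
  have hdenR : (((r i).den : ℤ) : ℝ) ≠ 0 := Int.cast_ne_zero.mpr hden0
  have hcast2 : ((r i : ℚ) : ℝ) = ((r i).num : ℝ) / (((r i).den : ℕ) : ℝ) := by rw [Rat.cast_def]
  have hER : ((D : ℤ) : ℝ) = (((r i).den : ℤ) : ℝ) * (E : ℝ) := by exact_mod_cast hE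
  rw [hcast2]
  push_cast
  rw [div_mul_eq_mul_div, div_eq_iff (by push_cast at hdenR ⊢; exact hdenR)]
  have hgoal : x j₀ / ((D : ℤ) : ℝ) * (((r i).num : ℝ) * (E : ℝ)) * (((r i).den : ℕ) : ℝ)
      = ((r i).num : ℝ) * x j₀ := by
    rw [div_mul_eq_mul_div, div_mul_eq_mul_div, div_eq_iff hDR, hER]
    push_cast
    ring
  push_cast at hgoal ⊢
  linarith [hgoal]

lemma exists_indep_pair (g : ℕ) (x : Fin (2 * g) → ℝ)
    (hx : ¬ ∃ (c : ℝ) (u : Fin (2 * g) → ℤ), x = c • fun i => ((u i : ℤ) : ℝ)) :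
    ∃ M ∈ SpZ g, ∃ m : Fin g, Indep ((M.mulVec x) (lo g m)) ((M.mulVec x) (hi g m)) := by
  obtain ⟨i, j, hind⟩ := exists_indep_coords g x hx
  have hii : ∀ v : ℝ, ¬ Indep v v := by
    intro v hv
    exact hv 1 (-1) (by norm_num) (by push_cast; ring)
  rcases lo_or_hi g i with ⟨a, rfl⟩ | ⟨a, rfl⟩ <;> rcases lo_or_hi g j with ⟨b, rfl⟩ | ⟨b, rfl⟩
  · have hab : a ≠ b := by rintro rfl; exact hii _ hind
    exact pair_from_lolo g x x ⟨1, SpZ_one g, (Matrix.one_mulVec x).symm⟩ a b hab hind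
  · rcases eq_or_ne a b with rfl | hab
    · exact ⟨1, SpZ_one g, a, by rw [Matrix.one_mulVec]; exact hind⟩
    · set y := (EmbM g 0 (-1) 1 0 b).mulVec x with hy
      have hyv : y = up2 g x b (-(x (hi g b))) (x (lo g b)) := by rw [hy, Rsw_mulVec]
      have h1 : y (lo g a) = x (lo g a) := by
        rw [hyv]; exact up2_other _ _ _ _ _ (fun h => hab (lo_inj g h)) (lo_ne_hi g a b)
      have h2 : y (lo g b) = -(x (hi g b)) := by rw [hyv]; exact up2_lo _ _ _ _ _
      refine pair_from_lolo g x y ⟨_, Rsw_mem g b, hy⟩ a b hab ?_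
      rw [h1, h2]
      exact indep_neg_right hind
  · rcases eq_or_ne a b with rfl | hab
    · exact ⟨1, SpZ_one g, a, by rw [Matrix.one_mulVec]; exact indep_symm hind⟩
    · set y := (EmbM g 0 (-1) 1 0 a).mulVec x with hy
      have hyv : y = up2 g x a (-(x (hi g a))) (x (lo g a)) := by rw [hy, Rsw_mulVec]
      have h1 : y (lo g a) = -(x (hi g a)) := by rw [hyv]; exact up2_lo _ _ _ _ _
      have h2 : y (lo g b) = x (lo g b) := by
        rw [hyv]; exact up2_other _ _ _ _ _ (fun h => hab (lo_inj g h).symm) (lo_ne_hi g b a)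
      refine pair_from_lolo g x y ⟨_, Rsw_mem g a, hy⟩ a b hab ?_
      rw [h1, h2]
      exact indep_neg_left hind
  · have hab : a ≠ b := by rintro rfl; exact hii _ hind
    set y1 := (EmbM g 0 (-1) 1 0 a).mulVec x with hy1
    set y := (EmbM g 0 (-1) 1 0 b).mulVec y1 with hy2
    have hy1v : y1 = up2 g x a (-(x (hi g a))) (x (lo g a)) := by rw [hy1, Rsw_mulVec]
    have hyv : y = up2 g y1 b (-(y1 (hi g b))) (y1 (lo g b)) := by rw [hy2, Rsw_mulVec]
    have h1 : y (lo g a) = -(x (hi g a)) := by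
      rw [hyv, up2_other _ _ _ _ _ (fun h => hab (lo_inj g h)) (lo_ne_hi g a b), hy1v, up2_lo]
    have h2 : y (lo g b) = -(x (hi g b)) := by
      rw [hyv, up2_lo]
      congr 1
      rw [hy1v]
      exact up2_other _ _ _ _ _ ((lo_ne_hi g a b).symm) (fun h => hab (hi_inj g h).symm)
    have hmem : ∃ M ∈ SpZ g, y = M.mulVec x :=
      ⟨EmbM g 0 (-1) 1 0 b * EmbM g 0 (-1) 1 0 a, SpZ_mul g (Rsw_mem g b) (Rsw_mem g a),
        by rw [hy2, hy1, Matrix.mulVec_mulVec]⟩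
    refine pair_from_lolo g x y hmem a b hab ?_
    rw [h1, h2]
    exact indep_neg_left (indep_neg_right hind)

lemma dense_orbit (g : ℕ) (x : Fin (2 * g) → ℝ)
    (hx : ¬ ∃ (c : ℝ) (u : Fin (2 * g) → ℤ), x = c • fun i => ((u i : ℤ) : ℝ)) :
    Dense (orb g x) := by
  obtain ⟨M, hM, m, hind⟩ := exists_indep_pair g x hx
  have hymem : M.mulVec x ∈ closure (orb g x) := subset_closure ⟨M, hM, rfl⟩
  intro w
  exact bootstrap g x (M.mulVec x) m
    (fun α β => pair_free g x _ hymem m hind α β) w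

lemma orb_lattice (g : ℕ) (c : ℝ) (u : Fin (2 * g) → ℤ) :
    ∀ y ∈ orb g (c • fun i => ((u i : ℤ) : ℝ)),
      ∃ v : Fin (2 * g) → ℤ, y = fun j => c * ((v j : ℤ) : ℝ) := by
  rintro y ⟨M, hM, rfl⟩
  choose K hK using hM.2
  refine ⟨fun i => ∑ l, K i l * u l, ?_⟩
  funext i
  simp only [Matrix.mulVec, dotProduct, Pi.smul_apply, smul_eq_mul]
  push_cast
  rw [Finset.mul_sum]
  refine Finset.sum_congr rfl fun j _ => ?_
  rw [hK i j]
  ring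

lemma lattice_sep (g : ℕ) (c : ℝ) (hc : c ≠ 0) (v w : Fin (2 * g) → ℤ)
    (h : dist (fun j => c * ((v j : ℤ) : ℝ)) (fun j => c * ((w j : ℤ) : ℝ)) < |c|) :
    (fun j => c * ((v j : ℤ) : ℝ)) = (fun j => c * ((w j : ℤ) : ℝ)) := by
  have hcpos : 0 < |c| := abs_pos.mpr hc
  funext i
  have hi := dist_le_pi_dist (fun j => c * ((v j : ℤ) : ℝ)) (fun j => c * ((w j : ℤ) : ℝ)) i
  have h2 : |c * ((v i : ℤ) : ℝ) - c * ((w i : ℤ) : ℝ)| < |c| := by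
    rw [← Real.dist_eq]
    exact lt_of_le_of_lt hi h
  have h3 : |c| * |((v i : ℤ) : ℝ) - ((w i : ℤ) : ℝ)| < |c| * 1 := by
    rw [mul_one, ← abs_mul]
    calc |c * (((v i : ℤ) : ℝ) - ((w i : ℤ) : ℝ))|
        = |c * ((v i : ℤ) : ℝ) - c * ((w i : ℤ) : ℝ)| := by ring_nf
      _ < |c| := h2
  have h4 : |((v i : ℤ) : ℝ) - ((w i : ℤ) : ℝ)| < 1 := lt_of_mul_lt_mul_left h3 (le_of_lt hcpos)
  have h5 : |(v i - w i : ℤ)| < 1 := by exact_mod_cast h4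
  have h6 : v i = w i := by have := abs_lt.mp h5; omega
  rw [h6]

lemma sep_orbit (g : ℕ) (c : ℝ) (hc : c ≠ 0) (u : Fin (2 * g) → ℤ)
    {y₁ y₂ : Fin (2 * g) → ℝ} (h1 : y₁ ∈ orb g (c • fun i => ((u i : ℤ) : ℝ)))
    (h2 : y₂ ∈ orb g (c • fun i => ((u i : ℤ) : ℝ))) (hd : dist y₁ y₂ < |c|) : y₁ = y₂ := by
  obtain ⟨v, rfl⟩ := orb_lattice g c u y₁ h1
  obtain ⟨w, rfl⟩ := orb_lattice g c u y₂ h2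
  exact lattice_sep g c hc v w hd

lemma closed_orbit (g : ℕ) (c : ℝ) (hc : c ≠ 0) (u : Fin (2 * g) → ℤ) :
    IsClosed (orb g (c • fun i => ((u i : ℤ) : ℝ))) := by
  have hcpos : 0 < |c| := abs_pos.mpr hc
  apply isClosed_of_closure_subset
  intro w hw
  obtain ⟨a, hao, had⟩ := Metric.mem_closure_iff.mp hw (|c| / 2) (by linarith)
  suffices hwa : w = a by rw [hwa]; exact hao
  by_contra hne
  have hdpos : 0 < dist w a := dist_pos.mpr (fun h => hne h)
  obtain ⟨a', ha'o, ha'd⟩ := Metric.mem_closure_iff.mp hw (min (dist w a) (|c| / 2))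
    (lt_min hdpos (by linarith))
  have haa' : a' = a := by
    apply sep_orbit g c hc u ha'o hao
    calc dist a' a ≤ dist a' w + dist w a := dist_triangle _ _ _
      _ < |c| := by
          have hb1 : dist a' w = dist w a' := dist_comm _ _
          have hb2 := lt_of_lt_of_le ha'd (min_le_right _ _)
          rw [hb1]
          linarith
  rw [haa'] at ha'd
  have := lt_of_lt_of_le ha'd (min_le_left _ _)
  exact absurd this (lt_irrefl _)

lemma discrete_orbit (g : ℕ) (c : ℝ) (hc : c ≠ 0) (u : Fin (2 * g) → ℤ) :
    DiscreteTopology ↑(orb g (c • fun i => ((u i : ℤ) : ℝ))) := by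
  have hcpos : 0 < |c| := abs_pos.mpr hc
  rw [discreteTopology_iff_isOpen_singleton]
  rintro ⟨a, ha⟩
  have hset : ({(⟨a, ha⟩ : ↑(orb g (c • fun i => ((u i : ℤ) : ℝ))))} :
      Set ↑(orb g (c • fun i => ((u i : ℤ) : ℝ))))
      = Subtype.val ⁻¹' Metric.ball a |c| := by
    ext ⟨b, hb⟩
    simp only [Set.mem_singleton_iff, Set.mem_preimage, Metric.mem_ball, Subtype.mk.injEq]
    constructor
    · rintro rfl; simpa using hcpos
    · intro hlt
      exact sep_orbit g c hc u hb ha hlt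
  rw [hset]
  exact (Metric.isOpen_ball).preimage continuous_subtype_val

/-- for `x ≠ 0` in `ℝ^(2g)`: if `x` is not a real scalar multiple
of an integer vector then the `Sp(2g,ℤ)`-orbit of `x` is dense in `ℝ^(2g)`;
otherwise the orbit is a discrete closed subset of `ℝ^(2g)`. -/
theorem spz_orbit_dense_or_discrete (g : ℕ) (hg : 2 ≤ g)
    (x : Fin (2 * g) → ℝ) (hx : x ≠ 0) :
    ((¬ ∃ (c : ℝ) (u : Fin (2 * g) → ℤ), x = c • fun i => ((u i : ℤ) : ℝ)) →
      Dense {y : Fin (2 * g) → ℝ | ∃ M ∈ SpZ g, y = M.mulVec x}) ∧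
    ((∃ (c : ℝ) (u : Fin (2 * g) → ℤ), x = c • fun i => ((u i : ℤ) : ℝ)) →
      IsClosed {y : Fin (2 * g) → ℝ | ∃ M ∈ SpZ g, y = M.mulVec x} ∧
        DiscreteTopology ↥{y : Fin (2 * g) → ℝ | ∃ M ∈ SpZ g, y = M.mulVec x}) := by
  constructor
  · intro hnot
    exact dense_orbit g x hnot
  · rintro ⟨c, u, rfl⟩
    have hc : c ≠ 0 := by
      rintro rfl
      apply hx
      funext j
      simp
    exact ⟨closed_orbit g c hc u, discrete_orbit g c hc u⟩
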